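/- In the N-class model, let V* : X → ℝ be the unique fixed point of the Bellman operator L_c. Then for every state (n,i) ∈ X, the infimum over b ≥ 0 defining (L_c V*)(n,i) is attained at the unique point b*(n,i) := max(0, W↑(n,i;V*) − W↓(n,i;V*)); in particular b*(n,i) > 0 if and only if W↑(n,i;V*) > W↓(n,i;V*). -/

import Mathlib

noncomputable section

open MeasureTheory Set

/-- Cumulative distribution function of the loss: point mass `p₀` at zero plus density `fL`. -/
def lossCdf (p₀ : ℝ) (fL : ℝ → ℝ) (x : ℝ) : ℝ := p₀ + ∫ ℓ in (0:ℝ)..x, fL ℓ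

/-- Rate class after a bonus: `n↓ = max(n−1,1)` (classes are 0-indexed by `Fin N`). -/
def rdown {N : ℕ} (n : Fin N) : Fin N :=
  ⟨n.val - 1, lt_of_le_of_lt (Nat.sub_le _ _) n.isLt⟩

/-- Rate class after a malus: `n↑ = min(n+1,N)` (classes are 0-indexed by `Fin N`). -/
def rup {N : ℕ} (n : Fin N) : Fin N :=
  if h : n.val + 1 < N then ⟨n.val + 1, h⟩ else n

/-- Company-switching probability `σ(n,i)`; company `0` is Company 1, company `1` is
Company 2, and `c i` is the premium schedule of company `i`. -/
def swProb {N : ℕ} (η : ℝ → ℝ) (c : Fin 2 → Fin N → ℝ) (n : Fin N) (i : Fin 2) : ℝ :=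
  if i = 0 then 1 - η (c 1 (rdown n) - c 0 (rdown n))
  else η (c 1 (rdown n) - c 0 (rdown n))

/-- Continuation value after a bonus: `W↓(n,i;v)`. (`i + 1` in `Fin 2` is the other company.) -/
def Wdown {N : ℕ} (η : ℝ → ℝ) (c : Fin 2 → Fin N → ℝ) (v : Fin N × Fin 2 → ℝ)
    (n : Fin N) (i : Fin 2) : ℝ :=
  (1 - swProb η c n i) * v (rdown n, i) + swProb η c n i * v (rdown n, i + 1)

/-- Continuation value after a malus: `W↑(n,i;v)`. -/
def Wup {N : ℕ} (η : ℝ → ℝ) (c : Fin 2 → Fin N → ℝ) (v : Fin N × Fin 2 → ℝ)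
    (n : Fin N) (i : Fin 2) : ℝ :=
  (1 - swProb η c n i) * v (rup n, i) + swProb η c n i * v (rup n, i + 1)

/-- One-step Bellman objective in the reporting barrier `b`. -/
def bellObj {N : ℕ} (p₀ δ : ℝ) (fL η : ℝ → ℝ) (c : Fin 2 → Fin N → ℝ)
    (v : Fin N × Fin 2 → ℝ) (x : Fin N × Fin 2) (b : ℝ) : ℝ :=
  δ * (c x.2 x.1 + (∫ ℓ in (0:ℝ)..b, ℓ * fL ℓ)
    + lossCdf p₀ fL b * Wdown η c v x.1 x.2
    + (1 - lossCdf p₀ fL b) * Wup η c v x.1 x.2)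

/-- The Bellman operator `L_c`. -/
def bellOp {N : ℕ} (p₀ δ : ℝ) (fL η : ℝ → ℝ) (c : Fin 2 → Fin N → ℝ)
    (v : Fin N × Fin 2 → ℝ) (x : Fin N × Fin 2) : ℝ :=
  ⨅ b : {b : ℝ // 0 ≤ b}, bellObj p₀ δ fL η c v x b.1

/-- The set of admissible premium pairs. -/
def premSet (N : ℕ) (μ M : ℝ) : Set (Fin 2 → Fin N → ℝ) :=
  {c | ∀ i : Fin 2, Monotone (c i) ∧ ∀ n : Fin N, c i n ∈ Set.Icc μ M}



private lemma intInt' (g : ℝ → ℝ) (hg : IntegrableOn g (Set.Ioi 0))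
    {a b : ℝ} (ha : 0 ≤ a) (hb : 0 ≤ b) :
    IntervalIntegrable g volume a b := by
  rw [intervalIntegrable_iff]
  exact hg.mono_set (fun x hx => lt_of_le_of_lt (le_min ha hb) hx.1)

private lemma intInt (fL : ℝ → ℝ) (hfint : IntegrableOn fL (Set.Ioi 0))
    (hmint : IntegrableOn (fun ℓ => ℓ * fL ℓ) (Set.Ioi 0)) (Δ : ℝ)
    {a b : ℝ} (ha : 0 ≤ a) (hb : 0 ≤ b) :
    IntervalIntegrable (fun ℓ => (ℓ - Δ) * fL ℓ) volume a b := by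
  have h1 := intInt' _ hmint ha hb
  have h2 := (intInt' _ hfint ha hb).const_mul Δ
  have h3 := h1.sub h2
  refine h3.congr_ae (Filter.EventuallyEq.of_eq ?_)
  funext x; ring

private lemma diff_formula {N : ℕ} (p₀ δ : ℝ) (fL η : ℝ → ℝ)
    (c : Fin 2 → Fin N → ℝ) (v : Fin N × Fin 2 → ℝ) (x : Fin N × Fin 2)
    (hfint : IntegrableOn fL (Set.Ioi 0))
    (hmint : IntegrableOn (fun ℓ => ℓ * fL ℓ) (Set.Ioi 0))
    {a b : ℝ} (ha : 0 ≤ a) (hb : 0 ≤ b) :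
    bellObj p₀ δ fL η c v x b - bellObj p₀ δ fL η c v x a
      = δ * ∫ ℓ in a..b, (ℓ - (Wup η c v x.1 x.2 - Wdown η c v x.1 x.2)) * fL ℓ := by
  set Δ := Wup η c v x.1 x.2 - Wdown η c v x.1 x.2 with hΔ
  have hf0a := intInt' fL hfint le_rfl ha
  have hf0b := intInt' fL hfint le_rfl hb
  have hfab := intInt' fL hfint ha hb
  have hm0a := intInt' _ hmint le_rfl ha
  have hm0b := intInt' _ hmint le_rfl hb
  have hmab := intInt' _ hmint ha hb
  have hI : (∫ ℓ in (0:ℝ)..b, ℓ * fL ℓ) - (∫ ℓ in (0:ℝ)..a, ℓ * fL ℓ)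
      = ∫ ℓ in a..b, ℓ * fL ℓ :=
    intervalIntegral.integral_interval_sub_left hm0b hm0a
  have hS : (∫ ℓ in (0:ℝ)..b, fL ℓ) - (∫ ℓ in (0:ℝ)..a, fL ℓ)
      = ∫ ℓ in a..b, fL ℓ :=
    intervalIntegral.integral_interval_sub_left hf0b hf0a
  have hR : (∫ ℓ in a..b, (ℓ - Δ) * fL ℓ)
      = (∫ ℓ in a..b, ℓ * fL ℓ) - Δ * ∫ ℓ in a..b, fL ℓ := by
    rw [← intervalIntegral.integral_const_mul,
      ← intervalIntegral.integral_sub hmab (hfab.const_mul Δ)]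
    congr 1; funext ℓ; ring
  simp only [bellObj, lossCdf]
  rw [hR, ← hI, ← hS, hΔ]
  ring

set_option maxHeartbeats 1000000 in
/-- at the unique fixed point `V*` of the Bellman operator, the infimum
over `b ≥ 0` defining `(L_c V*)(n,i)` is attained at the unique point
`b*(n,i) = max 0 (W↑(n,i;V*) − W↓(n,i;V*))`; in particular `b*(n,i) > 0` iff
`W↑(n,i;V*) > W↓(n,i;V*)`. -/
theorem stmt_5 (N : ℕ) (p₀ δ μ M : ℝ) (fL η : ℝ → ℝ)
    (hN : 2 ≤ N) (hp₀ : p₀ ∈ Set.Ioo (0:ℝ) 1) (hδ : δ ∈ Set.Ioo (0:ℝ) 1)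
    (hfc : ContinuousOn fL (Set.Ioi 0)) (hfpos : ∀ ℓ : ℝ, 0 < ℓ → 0 < fL ℓ)
    (hfint : IntegrableOn fL (Set.Ioi 0))
    (hftot : ∫ ℓ in Set.Ioi (0:ℝ), fL ℓ = 1 - p₀)
    (hmint : IntegrableOn (fun ℓ => ℓ * fL ℓ) (Set.Ioi 0))
    (hμ : μ = ∫ ℓ in Set.Ioi (0:ℝ), ℓ * fL ℓ) (hμpos : 0 < μ) (hM : μ ≤ M)
    (hηc : Continuous η) (hηm : Monotone η) (hη01 : ∀ t : ℝ, η t ∈ Set.Icc (0:ℝ) 1)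
    (c : Fin 2 → Fin N → ℝ) (hc : c ∈ premSet N μ M)
    (V : Fin N × Fin 2 → ℝ)
    (hV : bellOp p₀ δ fL η c V = V)
    (hVuniq : ∀ v : Fin N × Fin 2 → ℝ, bellOp p₀ δ fL η c v = v → v = V) :
    ∀ x : Fin N × Fin 2,
      bellOp p₀ δ fL η c V x
        = bellObj p₀ δ fL η c V x (max 0 (Wup η c V x.1 x.2 - Wdown η c V x.1 x.2)) ∧
      (∀ b : ℝ, 0 ≤ b →
        bellObj p₀ δ fL η c V x (max 0 (Wup η c V x.1 x.2 - Wdown η c V x.1 x.2))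
          ≤ bellObj p₀ δ fL η c V x b) ∧
      (∀ b : ℝ, 0 ≤ b →
        bellObj p₀ δ fL η c V x b
          = bellObj p₀ δ fL η c V x (max 0 (Wup η c V x.1 x.2 - Wdown η c V x.1 x.2)) →
        b = max 0 (Wup η c V x.1 x.2 - Wdown η c V x.1 x.2)) ∧
      (0 < max 0 (Wup η c V x.1 x.2 - Wdown η c V x.1 x.2)
        ↔ Wdown η c V x.1 x.2 < Wup η c V x.1 x.2) := by
  intro x
  obtain ⟨hδ0, hδ1⟩ := hδ
  set Wd := Wdown η c V x.1 x.2 with hWd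
  set Wu := Wup η c V x.1 x.2 with hWu
  set Δ := Wu - Wd with hΔ
  set bs := max 0 Δ with hbs
  have hbs0 : 0 ≤ bs := le_max_left _ _
  -- strict positivity of the integral off the minimizer
  have hkey : ∀ b : ℝ, 0 ≤ b → b ≠ bs →
      0 < ∫ ℓ in bs..b, (ℓ - Δ) * fL ℓ := by
    intro b hb hne
    rcases lt_or_gt_of_ne hne with hlt | hgt
    · -- b < bs, hence 0 < bs so bs = Δ
      have hΔpos : 0 < bs := lt_of_le_of_lt hb hlt
      have hbsΔ : bs = Δ := by
        rcases max_cases (0:ℝ) Δ with ⟨h1, _⟩ | ⟨h1, _⟩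
        · rw [hbs, h1] at hΔpos; exact absurd hΔpos (lt_irrefl 0)
        · rw [hbs, h1]
      have heq : (∫ ℓ in bs..b, (ℓ - Δ) * fL ℓ)
          = ∫ ℓ in b..bs, (Δ - ℓ) * fL ℓ := by
        rw [intervalIntegral.integral_symm, ← intervalIntegral.integral_neg]
        congr 1; funext ℓ; ring
      rw [heq]
      have hint : IntervalIntegrable (fun ℓ => (Δ - ℓ) * fL ℓ) volume b bs := by
        have := (intInt fL hfint hmint Δ hb hbs0).neg
        refine this.congr_ae (Filter.EventuallyEq.of_eq ?_)
        funext ℓ; simp only [Pi.neg_apply]; ring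
      refine intervalIntegral.intervalIntegral_pos_of_pos_on hint ?_ hlt
      intro ℓ hℓ
      have hℓ0 : 0 < ℓ := lt_of_le_of_lt hb hℓ.1
      have : ℓ < Δ := hbsΔ ▸ hℓ.2
      exact mul_pos (by linarith) (hfpos ℓ hℓ0)
    · -- bs < b
      have hint := intInt fL hfint hmint Δ hbs0 hb
      refine intervalIntegral.intervalIntegral_pos_of_pos_on hint ?_ hgt
      intro ℓ hℓ
      have hℓ0 : 0 < ℓ := lt_of_le_of_lt hbs0 hℓ.1
      have hℓΔ : Δ < ℓ := lt_of_le_of_lt (le_max_right 0 Δ) hℓ.1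
      exact mul_pos (by linarith) (hfpos ℓ hℓ0)
  have hdiff : ∀ b : ℝ, 0 ≤ b →
      bellObj p₀ δ fL η c V x b - bellObj p₀ δ fL η c V x bs
        = δ * ∫ ℓ in bs..b, (ℓ - Δ) * fL ℓ := fun b hb =>
    diff_formula p₀ δ fL η c V x hfint hmint hbs0 hb
  have hmin : ∀ b : ℝ, 0 ≤ b →
      bellObj p₀ δ fL η c V x bs ≤ bellObj p₀ δ fL η c V x b := by
    intro b hb
    rcases eq_or_ne b bs with rfl | hne
    · exact le_rfl
    · have h := hdiff b hb
      nlinarith [hkey b hb hne]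
  refine ⟨?_, hmin, ?_, ?_⟩
  · -- infimum attained
    show (⨅ b : {b : ℝ // 0 ≤ b}, bellObj p₀ δ fL η c V x b.1) = _
    have h1 : BddBelow (Set.range fun z : {b : ℝ // 0 ≤ b} =>
        bellObj p₀ δ fL η c V x z.1) := by
      refine ⟨bellObj p₀ δ fL η c V x bs, ?_⟩
      rintro y ⟨z, rfl⟩
      exact hmin z.1 z.2
    exact le_antisymm (ciInf_le h1 ⟨bs, hbs0⟩) (le_ciInf fun z => hmin z.1 z.2)
  · -- uniqueness
    intro b hb heq
    by_contra hne
    have h := hdiff b hb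
    have := hkey b hb hne
    nlinarith
  · constructor
    · intro h
      have : 0 < Δ := by
        rcases max_cases (0:ℝ) Δ with ⟨h1, _⟩ | ⟨h1, _⟩
        · rw [hbs, h1] at h; exact absurd h (lt_irrefl 0)
        · rwa [hbs, h1] at h
      linarith [hΔ ▸ this]
    · intro h
      have : 0 < Δ := by rw [hΔ]; linarith
      exact lt_of_lt_of_le this (le_max_right 0 Δ)


end
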